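/- arXiv:1401.0887 — 3 statements merged into one kernel-verified Lean document; each statement's English description precedes it below -/
import Mathlib

section
/- Let c, ε₁, ε₂ be real numbers with 0 ≤ c − ε₁, and let p_1, …, p_S (S ≥ 1) be real polynomials such that for every eigenvalue index ℓ : Fin N: (i) 0 ≤ p_s.eval (λ_ℓ) ≤ c for every s, and (ii) c − ε₁ ≤ Σ_{s=1}^S p_s.eval (λ_ℓ) ≤ c + ε₂. Then the atoms {d_{s,n}} form a frame: for every y ∈ ℝ^N, ((c − ε₁)² / S) · ‖y‖² ≤ Σ_{n=1}^N Σ_{s=1}^S ⟨y, d_{s,n}⟩² ≤ (c + ε₂)² · ‖y‖². -/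
open Matrix in
/-- Conjugation by a unitary matrix as an algebra homomorphism. -/
noncomputable def unitaryConjAlgHom {n : Type*} [Fintype n] [DecidableEq n]
    (U : Matrix.unitaryGroup n ℝ) : Matrix n n ℝ →ₐ[ℝ] Matrix n n ℝ where
  toFun x := (U : Matrix n n ℝ) * x * star (U : Matrix n n ℝ)
  map_one' := by
    show (U : Matrix n n ℝ) * 1 * star (U : Matrix n n ℝ) = 1
    rw [mul_one]; exact Unitary.coe_mul_star_self U
  map_mul' a b := by
    have h : star (U : Matrix n n ℝ) * (U : Matrix n n ℝ) = 1 := Unitary.coe_star_mul_self U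
    show (U : Matrix n n ℝ) * (a * b) * star (U : Matrix n n ℝ)
      = (U : Matrix n n ℝ) * a * star (U : Matrix n n ℝ) *
        ((U : Matrix n n ℝ) * b * star (U : Matrix n n ℝ))
    simp only [mul_assoc]
    rw [← mul_assoc (star (U : Matrix n n ℝ)) (U : Matrix n n ℝ)
      (b * star (U : Matrix n n ℝ)), h, one_mul]
  map_zero' := by
    show (U : Matrix n n ℝ) * 0 * star (U : Matrix n n ℝ) = 0
    simp
  map_add' a b := by
    show (U : Matrix n n ℝ) * (a + b) * star (U : Matrix n n ℝ) = _
    rw [mul_add, add_mul]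
  commutes' r := by
    show (U : Matrix n n ℝ) * algebraMap ℝ (Matrix n n ℝ) r * star (U : Matrix n n ℝ) = _
    simp [Algebra.algebraMap_eq_smul_one, mul_smul_comm, smul_mul_assoc,
      Unitary.coe_mul_star_self U]

open Matrix in
lemma sum_sq_vecMul_eq {n : Type*} [Fintype n] [DecidableEq n] (W : Matrix n n ℝ)
    (h : W * Wᵀ = 1) (b : n → ℝ) :
    ∑ j, (b ᵥ* W) j ^ 2 = ∑ i, b i ^ 2 := by
  have h1 : ∑ j, (b ᵥ* W) j ^ 2 = (b ᵥ* W) ⬝ᵥ (b ᵥ* W) := by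
    simp [dotProduct, sq]
  have h2 : ∑ i, b i ^ 2 = b ⬝ᵥ b := by simp [dotProduct, sq]
  rw [h1, h2, ← Matrix.mulVec_transpose, Matrix.dotProduct_mulVec,
    Matrix.vecMul_transpose, Matrix.mulVec_mulVec, h, Matrix.one_mulVec]

/-- Frame bounds for the polynomial graph dictionary: if the generating kernels
`p s` satisfy `0 ≤ p_s(λ_ℓ) ≤ c` and `c - ε₁ ≤ Σ_s p_s(λ_ℓ) ≤ c + ε₂` on the
spectrum of `L`, then the atoms `d_{s,n}` (columns of `(p s)(L)`) form a frame
with bounds `(c - ε₁)² / S` and `(c + ε₂)²`. -/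
theorem polynomial_dictionary_frame
    (N S : ℕ) (hN : 0 < N) (hS : 1 ≤ S)
    (L : Matrix (Fin N) (Fin N) ℝ) (hL : L.IsHermitian)
    (c ε₁ ε₂ : ℝ) (hc : 0 ≤ c - ε₁)
    (p : Fin S → Polynomial ℝ)
    (h1 : ∀ (ℓ : Fin N) (s : Fin S),
      0 ≤ (p s).eval (hL.eigenvalues ℓ) ∧ (p s).eval (hL.eigenvalues ℓ) ≤ c)
    (h2 : ∀ ℓ : Fin N,
      c - ε₁ ≤ ∑ s : Fin S, (p s).eval (hL.eigenvalues ℓ) ∧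
      ∑ s : Fin S, (p s).eval (hL.eigenvalues ℓ) ≤ c + ε₂)
    (y : Fin N → ℝ) :
    (c - ε₁) ^ 2 / (S : ℝ) * ∑ i : Fin N, (y i) ^ 2 ≤
      ∑ n : Fin N, ∑ s : Fin S,
        (∑ i : Fin N, y i * (Polynomial.aeval L (p s)) i n) ^ 2 ∧
    ∑ n : Fin N, ∑ s : Fin S,
        (∑ i : Fin N, y i * (Polynomial.aeval L (p s)) i n) ^ 2 ≤
      (c + ε₂) ^ 2 * ∑ i : Fin N, (y i) ^ 2 := by
  classical
  set U : Matrix (Fin N) (Fin N) ℝ := (hL.eigenvectorUnitary : Matrix (Fin N) (Fin N) ℝ)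
  set lam : Fin N → ℝ := hL.eigenvalues
  -- spectral theorem
  have hspec : L = U * Matrix.diagonal lam * star U := by
    have := hL.spectral_theorem
    simpa [U, lam] using this
  -- aeval of a diagonal matrix
  have haevdiag : ∀ (q : Polynomial ℝ) (d : Fin N → ℝ),
      Polynomial.aeval (Matrix.diagonal d) q = Matrix.diagonal (fun i => q.eval (d i)) := by
    intro q d
    have := Polynomial.aeval_algHom_apply (Matrix.diagonalAlgHom (R := ℝ) (n := Fin N) (α := ℝ)) d q
    simp only [Matrix.diagonalAlgHom_apply] at this
    rw [this]
    exact congrArg Matrix.diagonal (funext fun i => Polynomial.aeval_fn_apply q d i)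
  -- aeval of L
  have haevL : ∀ q : Polynomial ℝ,
      Polynomial.aeval L q = U * Matrix.diagonal (fun ℓ => q.eval (lam ℓ)) * star U := by
    intro q
    have hU : L = unitaryConjAlgHom hL.eigenvectorUnitary (Matrix.diagonal lam) := hspec
    rw [hU, Polynomial.aeval_algHom_apply, haevdiag]
    rfl
  -- orthogonality facts
  have hUU : U * U.transpose = 1 := by
    have := Unitary.coe_mul_star_self hL.eigenvectorUnitary
    simpa [U, Matrix.star_eq_conjTranspose, Matrix.conjTranspose_eq_transpose_of_trivial] using this
  have hsUU : star U * (star U).transpose = 1 := by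
    have := Unitary.coe_star_mul_self hL.eigenvectorUnitary
    simpa [U, Matrix.star_eq_conjTranspose, Matrix.conjTranspose_eq_transpose_of_trivial] using this
  set a : Fin N → ℝ := Matrix.vecMul y U with ha
  have hnorm : ∑ i, y i ^ 2 = ∑ ℓ, a ℓ ^ 2 := (sum_sq_vecMul_eq U hUU y).symm
  -- per-kernel identity
  have hker : ∀ s : Fin S,
      ∑ n, (∑ i, y i * (Polynomial.aeval L (p s)) i n) ^ 2
        = ∑ ℓ, ((p s).eval (lam ℓ)) ^ 2 * a ℓ ^ 2 := by
    intro s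
    have hcol : ∀ n, (∑ i, y i * (Polynomial.aeval L (p s)) i n)
        = (Matrix.vecMul (fun ℓ => a ℓ * (p s).eval (lam ℓ)) (star U)) n := by
      intro n
      have : (∑ i, y i * (Polynomial.aeval L (p s)) i n) = (Matrix.vecMul y (Polynomial.aeval L (p s))) n := by
        simp [Matrix.vecMul, dotProduct]
      rw [this, haevL (p s), ← Matrix.vecMul_vecMul, ← Matrix.vecMul_vecMul]
      congr 1
      funext ℓ
      simp [Matrix.vecMul_diagonal, ha]
    calc ∑ n, (∑ i, y i * (Polynomial.aeval L (p s)) i n) ^ 2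
        = ∑ n, ((Matrix.vecMul (fun ℓ => a ℓ * (p s).eval (lam ℓ)) (star U)) n) ^ 2 := by
          simp only [hcol]
      _ = ∑ ℓ, (a ℓ * (p s).eval (lam ℓ)) ^ 2 := sum_sq_vecMul_eq (star U) hsUU _
      _ = ∑ ℓ, ((p s).eval (lam ℓ)) ^ 2 * a ℓ ^ 2 := by
          apply Finset.sum_congr rfl; intro ℓ _; ring
  have hmain : ∑ n, ∑ s, (∑ i, y i * (Polynomial.aeval L (p s)) i n) ^ 2
      = ∑ ℓ, (∑ s, ((p s).eval (lam ℓ)) ^ 2) * a ℓ ^ 2 := by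
    rw [Finset.sum_comm]
    calc ∑ s, ∑ n, (∑ i, y i * (Polynomial.aeval L (p s)) i n) ^ 2
        = ∑ s, ∑ ℓ, ((p s).eval (lam ℓ)) ^ 2 * a ℓ ^ 2 := by
          exact Finset.sum_congr rfl fun s _ => hker s
      _ = ∑ ℓ, (∑ s, ((p s).eval (lam ℓ)) ^ 2) * a ℓ ^ 2 := by
          rw [Finset.sum_comm]
          exact Finset.sum_congr rfl fun ℓ _ => (Finset.sum_mul _ _ _).symm
  have hSpos : (0 : ℝ) < S := by exact_mod_cast Nat.lt_of_lt_of_le Nat.zero_lt_one hS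
  -- pointwise bounds on ∑ s p_s(λ)^2
  have hlow : ∀ ℓ, (c - ε₁) ^ 2 / S ≤ ∑ s, ((p s).eval (lam ℓ)) ^ 2 := by
    intro ℓ
    have hcs : (∑ s, (p s).eval (lam ℓ)) ^ 2 ≤ (S : ℝ) * ∑ s, ((p s).eval (lam ℓ)) ^ 2 := by
      simpa using sq_sum_le_card_mul_sum_sq (s := Finset.univ)
        (f := fun s : Fin S => (p s).eval (lam ℓ))
    have h1' : (c - ε₁) ^ 2 ≤ (∑ s, (p s).eval (lam ℓ)) ^ 2 :=
      pow_le_pow_left₀ hc (h2 ℓ).1 2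
    rw [div_le_iff₀ hSpos]
    calc (c - ε₁) ^ 2 ≤ (∑ s, (p s).eval (lam ℓ)) ^ 2 := h1'
      _ ≤ (S : ℝ) * ∑ s, ((p s).eval (lam ℓ)) ^ 2 := hcs
      _ = (∑ s, ((p s).eval (lam ℓ)) ^ 2) * S := by ring
  have hup : ∀ ℓ, ∑ s, ((p s).eval (lam ℓ)) ^ 2 ≤ (c + ε₂) ^ 2 := by
    intro ℓ
    have hnn : ∀ s ∈ Finset.univ, 0 ≤ (p s).eval (lam ℓ) := fun s _ => (h1 ℓ s).1
    have h3 : ∑ s, ((p s).eval (lam ℓ)) ^ 2 ≤ (∑ s, (p s).eval (lam ℓ)) ^ 2 :=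
      Finset.sum_sq_le_sq_sum_of_nonneg hnn
    have h4 : (∑ s, (p s).eval (lam ℓ)) ^ 2 ≤ (c + ε₂) ^ 2 :=
      pow_le_pow_left₀ (Finset.sum_nonneg hnn) (h2 ℓ).2 2
    linarith
  constructor
  · rw [hmain, hnorm, Finset.mul_sum]
    apply Finset.sum_le_sum
    intro ℓ _
    exact mul_le_mul_of_nonneg_right (hlow ℓ) (sq_nonneg _)
  · rw [hmain, hnorm, Finset.mul_sum]
    apply Finset.sum_le_sum
    intro ℓ _
    exact mul_le_mul_of_nonneg_right (hup ℓ) (sq_nonneg _)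
end

section
/- For every y ∈ ℝ^N, Σ_{n=1}^N Σ_{s=1}^S ⟨y, d_{s,n}⟩² = Σ_{ℓ : Fin N} ⟨y, χ_ℓ⟩² · Σ_{s=1}^S (p_s.eval (λ_ℓ))², where χ_ℓ is the orthonormal eigenbasis of L and λ_ℓ its eigenvalues. -/
open Matrix in
lemma aeval_spectral {N : ℕ} (L : Matrix (Fin N) (Fin N) ℝ) (hL : L.IsHermitian)
    (q : Polynomial ℝ) :
    Polynomial.aeval L q =
      (hL.eigenvectorUnitary : Matrix (Fin N) (Fin N) ℝ) *
        Matrix.diagonal (fun ℓ => q.eval (hL.eigenvalues ℓ)) *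
        star (hL.eigenvectorUnitary : Matrix (Fin N) (Fin N) ℝ) := by
  have hU : (hL.eigenvectorUnitary : Matrix (Fin N) (Fin N) ℝ) *
      star (hL.eigenvectorUnitary : Matrix (Fin N) (Fin N) ℝ) = 1 :=
    (Matrix.mem_unitaryGroup_iff).mp hL.eigenvectorUnitary.2
  have hU' : star (hL.eigenvectorUnitary : Matrix (Fin N) (Fin N) ℝ) *
      (hL.eigenvectorUnitary : Matrix (Fin N) (Fin N) ℝ) = 1 :=
    (Matrix.mem_unitaryGroup_iff').mp hL.eigenvectorUnitary.2
  induction q using Polynomial.induction_on with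
  | C a =>
      have : Matrix.diagonal (fun _ : Fin N => a) = a • (1 : Matrix (Fin N) (Fin N) ℝ) := by
        ext i j; by_cases h : i = j <;> simp [Matrix.diagonal_apply, Matrix.one_apply, h]
      simp [this, Matrix.mul_smul, Matrix.smul_mul, hU, Algebra.algebraMap_eq_smul_one]
  | add f g hf hg =>
      have hd : Matrix.diagonal (fun ℓ => (f + g).eval (hL.eigenvalues ℓ)) =
          Matrix.diagonal (fun ℓ => f.eval (hL.eigenvalues ℓ)) +
          Matrix.diagonal (fun ℓ => g.eval (hL.eigenvalues ℓ)) := by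
        ext i j; by_cases h : i = j <;> simp [Matrix.diagonal_apply, h]
      rw [map_add, hf, hg, hd, Matrix.mul_add, Matrix.add_mul]
  | monomial n a ih =>
      have h1 : Polynomial.C a * Polynomial.X ^ (n + 1) =
          (Polynomial.C a * Polynomial.X ^ n) * Polynomial.X := by ring
      have hLspec := hL.spectral_theorem
      rw [h1, _root_.map_mul, ih, Polynomial.aeval_X]
      have hdiag : Matrix.diagonal (fun ℓ => ((Polynomial.C a * Polynomial.X ^ n) *
            Polynomial.X).eval (hL.eigenvalues ℓ)) =
          Matrix.diagonal (fun ℓ => ((Polynomial.C a * Polynomial.X ^ n)).eval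
            (hL.eigenvalues ℓ)) * Matrix.diagonal (fun ℓ => hL.eigenvalues ℓ) := by
        rw [Matrix.diagonal_mul_diagonal]; congr 1; funext ℓ; simp
      have hLd : L = (hL.eigenvectorUnitary : Matrix (Fin N) (Fin N) ℝ) *
          Matrix.diagonal (fun ℓ => hL.eigenvalues ℓ) *
          star (hL.eigenvectorUnitary : Matrix (Fin N) (Fin N) ℝ) := by
        rw [Unitary.conjStarAlgAut_apply] at hLspec
        exact hLspec
      rw [hdiag]
      set U : Matrix (Fin N) (Fin N) ℝ := (hL.eigenvectorUnitary : Matrix (Fin N) (Fin N) ℝ)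
      set Dq : Matrix (Fin N) (Fin N) ℝ := Matrix.diagonal
        (fun ℓ => ((Polynomial.C a * Polynomial.X ^ n)).eval (hL.eigenvalues ℓ))
      set Dl : Matrix (Fin N) (Fin N) ℝ := Matrix.diagonal (fun ℓ => hL.eigenvalues ℓ)
      calc U * Dq * star U * L = U * Dq * star U * (U * Dl * star U) := by rw [← hLd]
        _ = U * (Dq * Dl) * star U := by
            simp only [Matrix.mul_assoc]
            rw [← Matrix.mul_assoc (star U) U, hU', Matrix.one_mul]

/-- Generalized Parseval identity for the polynomial graph dictionary: the sum of
squared inner products of a signal `y` with all atoms `d_{s,n}` equals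
`Σ_ℓ ⟨y, χ_ℓ⟩² Σ_s (p_s(λ_ℓ))²`. -/
theorem polynomial_dictionary_parseval
    (N S : ℕ) (hN : 0 < N) (hS : 1 ≤ S)
    (L : Matrix (Fin N) (Fin N) ℝ) (hL : L.IsHermitian)
    (p : Fin S → Polynomial ℝ)
    (y : Fin N → ℝ) :
    ∑ n : Fin N, ∑ s : Fin S,
        (∑ i : Fin N, y i * (Polynomial.aeval L (p s)) i n) ^ 2 =
      ∑ ℓ : Fin N,
        (∑ i : Fin N, y i * hL.eigenvectorBasis ℓ i) ^ 2 *
          ∑ s : Fin S, ((p s).eval (hL.eigenvalues ℓ)) ^ 2 := by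
  classical
  set χ : Fin N → Fin N → ℝ := fun ℓ i => hL.eigenvectorBasis ℓ i with hχ
  have orth : ∀ ℓ ℓ' : Fin N, ∑ n : Fin N, χ ℓ n * χ ℓ' n = if ℓ = ℓ' then 1 else 0 := by
    intro ℓ ℓ'
    have h := hL.eigenvectorBasis.orthonormal
    rw [orthonormal_iff_ite] at h
    have := h ℓ ℓ'
    rw [PiLp.inner_apply] at this
    simpa [mul_comm] using this
  -- entry formula
  have entry : ∀ (q : Polynomial ℝ) (i n : Fin N),
      (Polynomial.aeval L q) i n = ∑ ℓ : Fin N, χ ℓ i * q.eval (hL.eigenvalues ℓ) * χ ℓ n := by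
    intro q i n
    rw [aeval_spectral L hL q]
    rw [Matrix.mul_apply]
    refine Finset.sum_congr rfl fun ℓ _ => ?_
    rw [Matrix.mul_apply, Finset.sum_mul]
    rw [Finset.sum_eq_single ℓ]
    · simp [χ, Matrix.diagonal_apply_eq, Matrix.star_apply]
    · intro b _ hb; simp [Matrix.diagonal_apply_ne _ hb]
    · simp
  set c : Fin N → ℝ := fun ℓ => ∑ i : Fin N, y i * χ ℓ i with hc
  have col : ∀ (q : Polynomial ℝ) (n : Fin N),
      (∑ i : Fin N, y i * (Polynomial.aeval L q) i n) =
        ∑ ℓ : Fin N, (c ℓ * q.eval (hL.eigenvalues ℓ)) * χ ℓ n := by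
    intro q n
    simp only [entry, Finset.mul_sum]
    rw [Finset.sum_comm]
    refine Finset.sum_congr rfl fun ℓ _ => ?_
    rw [hc]
    rw [Finset.sum_mul, Finset.sum_mul]
    refine Finset.sum_congr rfl fun i _ => by ring
  have keysum : ∀ a : Fin N → ℝ,
      ∑ n : Fin N, (∑ ℓ : Fin N, a ℓ * χ ℓ n) ^ 2 = ∑ ℓ : Fin N, a ℓ ^ 2 := by
    intro a
    have : ∀ n : Fin N, (∑ ℓ : Fin N, a ℓ * χ ℓ n) ^ 2 =
        ∑ ℓ : Fin N, ∑ ℓ' : Fin N, (a ℓ * a ℓ') * (χ ℓ n * χ ℓ' n) := by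
      intro n
      rw [sq, Finset.sum_mul_sum]
      exact Finset.sum_congr rfl fun ℓ _ => Finset.sum_congr rfl fun ℓ' _ => by ring
    simp only [this]
    rw [Finset.sum_comm]
    refine Eq.trans (Finset.sum_congr rfl fun ℓ _ => ?_) rfl
    rw [Finset.sum_comm]
    have : ∀ ℓ' : Fin N, ∑ n : Fin N, (a ℓ * a ℓ') * (χ ℓ n * χ ℓ' n) =
        (a ℓ * a ℓ') * (if ℓ = ℓ' then 1 else 0) := by
      intro ℓ'
      rw [← Finset.mul_sum, orth]
    simp only [this]
    simp only [mul_ite, mul_one, mul_zero]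
    rw [Finset.sum_ite_eq]
    simp [sq]
  rw [Finset.sum_comm]
  calc ∑ s : Fin S, ∑ n : Fin N,
        (∑ i : Fin N, y i * (Polynomial.aeval L (p s)) i n) ^ 2
      = ∑ s : Fin S, ∑ ℓ : Fin N, (c ℓ * (p s).eval (hL.eigenvalues ℓ)) ^ 2 := by
        refine Finset.sum_congr rfl fun s _ => ?_
        simp only [col]
        exact keysum _
    _ = ∑ ℓ : Fin N, c ℓ ^ 2 * ∑ s : Fin S, ((p s).eval (hL.eigenvalues ℓ)) ^ 2 := by
        rw [Finset.sum_comm]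
        refine Finset.sum_congr rfl fun ℓ _ => ?_
        rw [Finset.mul_sum]
        exact Finset.sum_congr rfl fun s _ => by ring
    _ = _ := rfl
end

section
/- Suppose there is a real number A such that Σ_{s=1}^S (p_s.eval (λ_ℓ))² = A for every eigenvalue index ℓ : Fin N. Then the dictionary atoms form a tight frame: for every y ∈ ℝ^N, Σ_{n=1}^N Σ_{s=1}^S ⟨y, d_{s,n}⟩² = A · ‖y‖². -/
open Polynomial Matrix

lemma my_sum_mulVec {N : ℕ} {α : Type*} (s : Finset α) (f : α → Matrix (Fin N) (Fin N) ℝ)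
    (v : Fin N → ℝ) : (∑ a ∈ s, f a) *ᵥ v = ∑ a ∈ s, (f a) *ᵥ v := by
  ext j
  simp only [Matrix.mulVec, dotProduct, Matrix.sum_apply, Finset.sum_mul,
    Finset.sum_apply]
  exact Finset.sum_comm

lemma my_sum_vecMul {N : ℕ} {α : Type*} (s : Finset α) (f : α → Matrix (Fin N) (Fin N) ℝ)
    (v : Fin N → ℝ) : v ᵥ* (∑ a ∈ s, f a) = ∑ a ∈ s, v ᵥ* (f a) := by
  ext j
  simp only [Matrix.vecMul, dotProduct, Matrix.sum_apply, Finset.mul_sum,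
    Finset.sum_apply]
  exact Finset.sum_comm

/-- Powers act on eigenvectors by powers of eigenvalues. -/
lemma pow_mulVec_eigenvectorBasis {N : ℕ} (L : Matrix (Fin N) (Fin N) ℝ)
    (hL : L.IsHermitian) (k : ℕ) (ℓ : Fin N) :
    (L ^ k) *ᵥ ⇑(hL.eigenvectorBasis ℓ) = (hL.eigenvalues ℓ) ^ k • ⇑(hL.eigenvectorBasis ℓ) := by
  induction k with
  | zero => simp
  | succ k ih =>
      rw [pow_succ, ← Matrix.mulVec_mulVec, hL.mulVec_eigenvectorBasis, Matrix.mulVec_smul,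
        ih, smul_smul, pow_succ, mul_comm]

/-- Polynomial functional calculus on eigenvectors. -/
lemma aeval_mulVec_eigenvectorBasis {N : ℕ} (L : Matrix (Fin N) (Fin N) ℝ)
    (hL : L.IsHermitian) (q : Polynomial ℝ) (ℓ : Fin N) :
    (Polynomial.aeval L q) *ᵥ ⇑(hL.eigenvectorBasis ℓ) =
      q.eval (hL.eigenvalues ℓ) • ⇑(hL.eigenvectorBasis ℓ) := by
  rw [Polynomial.aeval_eq_sum_range, Polynomial.eval_eq_sum_range, my_sum_mulVec]
  simp_rw [Matrix.smul_mulVec, pow_mulVec_eigenvectorBasis L hL, smul_smul,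
    Finset.sum_smul]

lemma aeval_transpose {N : ℕ} (L : Matrix (Fin N) (Fin N) ℝ)
    (hL : L.IsHermitian) (q : Polynomial ℝ) :
    (Polynomial.aeval L q)ᵀ = Polynomial.aeval L q := by
  have hLt : Lᵀ = L := hL.eq
  rw [Polynomial.aeval_eq_sum_range, Matrix.transpose_sum]
  refine Finset.sum_congr rfl fun k _ => ?_
  rw [Matrix.transpose_smul, Matrix.transpose_pow, hLt]

/-- Tight frame condition: if `Σ_s (p_s(λ_ℓ))² = A` for every eigenvalue index
`ℓ`, then the dictionary atoms form a tight frame with frame bound `A`. -/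
theorem polynomial_dictionary_tight_frame
    (N S : ℕ) (hN : 0 < N) (hS : 1 ≤ S)
    (L : Matrix (Fin N) (Fin N) ℝ) (hL : L.IsHermitian)
    (p : Fin S → Polynomial ℝ) (A : ℝ)
    (hA : ∀ ℓ : Fin N, ∑ s : Fin S, ((p s).eval (hL.eigenvalues ℓ)) ^ 2 = A)
    (y : Fin N → ℝ) :
    ∑ n : Fin N, ∑ s : Fin S,
        (∑ i : Fin N, y i * (Polynomial.aeval L (p s)) i n) ^ 2 =
      A * ∑ i : Fin N, (y i) ^ 2 := by
  classical
  set q : Polynomial ℝ := ∑ s : Fin S, (p s) ^ 2 with hq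
  -- q(L) = A • 1
  have hkey : Polynomial.aeval L q = A • (1 : Matrix (Fin N) (Fin N) ℝ) := by
    apply Matrix.toEuclideanLin.injective
    apply Module.Basis.ext (hL.eigenvectorBasis).toBasis
    intro ℓ
    have h1 : (Polynomial.aeval L q) *ᵥ ⇑(hL.eigenvectorBasis ℓ) =
        A • ⇑(hL.eigenvectorBasis ℓ) := by
      rw [aeval_mulVec_eigenvectorBasis L hL q ℓ]
      congr 1
      rw [hq]
      simp only [Polynomial.eval_finset_sum, Polynomial.eval_pow]
      exact hA ℓ
    have h2 : (A • (1 : Matrix (Fin N) (Fin N) ℝ)) *ᵥ ⇑(hL.eigenvectorBasis ℓ) =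
        A • ⇑(hL.eigenvectorBasis ℓ) := by
      rw [Matrix.smul_mulVec, Matrix.one_mulVec]
    simp only [Matrix.toEuclideanLin_apply, OrthonormalBasis.coe_toBasis]
    apply PiLp.ext
    intro j
    simp only [PiLp.toLp_apply]
    rw [congrFun h1 j, congrFun h2 j]
  -- rewrite LHS
  have hs : ∀ s : Fin S, ∑ n : Fin N,
      (∑ i : Fin N, y i * (Polynomial.aeval L (p s)) i n) ^ 2 =
      (y ᵥ* (Polynomial.aeval L ((p s) ^ 2))) ⬝ᵥ y := by
    intro s
    set D := Polynomial.aeval L (p s) with hD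
    have hsym : Dᵀ = D := aeval_transpose L hL (p s)
    have hvm : ∀ n, (∑ i : Fin N, y i * D i n) = (y ᵥ* D) n := fun n => rfl
    calc ∑ n : Fin N, (∑ i : Fin N, y i * D i n) ^ 2
        = (y ᵥ* D) ⬝ᵥ (y ᵥ* D) := by
          simp only [dotProduct, hvm, sq]
      _ = (y ᵥ* D) ⬝ᵥ (D *ᵥ y) := by
          congr 1
          rw [← Matrix.mulVec_transpose, hsym]
      _ = ((y ᵥ* D) ᵥ* D) ⬝ᵥ y := by rw [dotProduct_mulVec]
      _ = (y ᵥ* (D * D)) ⬝ᵥ y := by rw [Matrix.vecMul_vecMul]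
      _ = (y ᵥ* (Polynomial.aeval L ((p s) ^ 2))) ⬝ᵥ y := by
          rw [map_pow, sq]
  rw [Finset.sum_comm]
  calc ∑ s : Fin S, ∑ n : Fin N,
        (∑ i : Fin N, y i * (Polynomial.aeval L (p s)) i n) ^ 2
      = ∑ s : Fin S, (y ᵥ* (Polynomial.aeval L ((p s) ^ 2))) ⬝ᵥ y := by
        exact Finset.sum_congr rfl fun s _ => hs s
    _ = (y ᵥ* (Polynomial.aeval L q)) ⬝ᵥ y := by
        rw [hq, map_sum, my_sum_vecMul]
        simp only [dotProduct, Finset.sum_apply]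
        rw [Finset.sum_comm]
        simp [Finset.sum_mul]
    _ = A * ∑ i : Fin N, (y i) ^ 2 := by
        rw [hkey]
        simp only [dotProduct, Matrix.vecMul, Matrix.smul_apply, Matrix.one_apply,
          smul_eq_mul, mul_ite, mul_one, mul_zero, Finset.sum_ite_eq, Finset.mem_univ, if_true]
        rw [Finset.mul_sum]
        exact Finset.sum_congr rfl fun i _ => by simp [Finset.sum_ite_eq']; ring
end
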